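/- Let λ be a positive integer with prime factorization λ = p₁^{a₁}⋯p_n^{a_n}·q₁^{b₁}⋯q_l^{b_l}·2^c, where each p_i is a prime ≡ 1 (mod 4) and each q_j is a prime ≡ 3 (mod 4). Then the number of pairs (x,y) ∈ ℤ² with x² + y² = λ equals 4·(1+a₁)⋯(1+a_n) if all b_j are even, and 0 otherwise. -/
import Mathlib

local notation "ℤ[i]" => GaussianInt
open Zsqrtd GaussianInt

def Gset (k : ℕ) : Set ℤ[i] := {z | z.norm = (k : ℤ)}

lemma Gset_finite (k : ℕ) : (Gset k).Finite := by
  have hsub : Gset k ⊆ (fun p : ℤ × ℤ => (⟨p.1, p.2⟩ : ℤ[i])) ''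
      (Set.Icc (-(k:ℤ)) k ×ˢ Set.Icc (-(k:ℤ)) k) := by
    intro z hz
    have hz' : z.re * z.re + z.im * z.im = (k : ℤ) := by
      have := hz; simp only [Gset, Set.mem_setOf_eq, Zsqrtd.norm_def] at this; linarith
    have h1 : |z.re| ≤ (k : ℤ) := by
      rcases eq_or_ne z.re 0 with h | h
      · simp [h]
      · have : 1 ≤ |z.re| := Int.one_le_abs (by simpa using h)
        nlinarith [abs_nonneg z.re, sq_abs z.re, mul_self_nonneg z.im]
    have h2 : |z.im| ≤ (k : ℤ) := by
      rcases eq_or_ne z.im 0 with h | h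
      · simp [h]
      · have : 1 ≤ |z.im| := Int.one_le_abs (by simpa using h)
        nlinarith [abs_nonneg z.im, sq_abs z.im, mul_self_nonneg z.re]
    exact ⟨(z.re, z.im), by simp [Set.mem_prod, abs_le.mp h1, abs_le.mp h2], rfl⟩
  exact (((Set.finite_Icc _ _).prod (Set.finite_Icc _ _)).image _).subset hsub

lemma transfer (k : ℕ) :
    {z : ℤ × ℤ | z.1 ^ 2 + z.2 ^ 2 = (k : ℤ)}.ncard = (Gset k).ncard := by
  have hinj : Function.Injective (fun p : ℤ × ℤ => (⟨p.1, p.2⟩ : ℤ[i])) := by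
    intro x y h
    simpa [Zsqrtd.ext_iff, Prod.ext_iff] using h
  have himg : (fun p : ℤ × ℤ => (⟨p.1, p.2⟩ : ℤ[i])) '' {z : ℤ × ℤ | z.1 ^ 2 + z.2 ^ 2 = (k : ℤ)}
      = Gset k := by
    ext z
    constructor
    · rintro ⟨⟨x, y⟩, hxy, rfl⟩
      simp only [Set.mem_setOf_eq] at hxy
      simp only [Gset, Set.mem_setOf_eq, Zsqrtd.norm_def]
      ring_nf
      ring_nf at hxy
      linarith
    · intro hz
      refine ⟨(z.re, z.im), ?_, rfl⟩
      simp only [Gset, Set.mem_setOf_eq, Zsqrtd.norm_def] at hz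
      simp only [Set.mem_setOf_eq]
      linarith [hz, sq z.re, sq z.im]
  rw [← himg, Set.ncard_image_of_injective _ hinj]

lemma mem_Gset_one (z : ℤ[i]) : z ∈ Gset 1 ↔
    z = ⟨1,0⟩ ∨ z = ⟨-1,0⟩ ∨ z = ⟨0,1⟩ ∨ z = ⟨0,-1⟩ := by
  obtain ⟨x, y⟩ := z
  simp only [Gset, Set.mem_setOf_eq, Zsqrtd.norm_def, Zsqrtd.ext_iff]
  constructor
  · intro h
    have h' : x * x + y * y = 1 := by push_cast at h; linarith
    have hx1 : x ≤ 1 := by nlinarith [sq_nonneg (x-1), sq_nonneg y]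
    have hx2 : -1 ≤ x := by nlinarith [sq_nonneg (x+1), sq_nonneg y]
    have hy1 : y ≤ 1 := by nlinarith [sq_nonneg (y-1), sq_nonneg x]
    have hy2 : -1 ≤ y := by nlinarith [sq_nonneg (y+1), sq_nonneg x]
    interval_cases x <;> interval_cases y <;> simp_all
  · rintro (⟨rfl, rfl⟩ | ⟨rfl, rfl⟩ | ⟨rfl, rfl⟩ | ⟨rfl, rfl⟩) <;> norm_num

lemma ncard_Gset_one : (Gset 1).ncard = 4 := by
  have : Gset 1 = {(⟨1,0⟩ : ℤ[i]), ⟨-1,0⟩, ⟨0,1⟩, ⟨0,-1⟩} := by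
    ext z; simp [mem_Gset_one]
  rw [this]
  rw [Set.ncard_insert_of_notMem (by simp [Zsqrtd.ext_iff])
    (Set.Finite.insert _ (Set.Finite.insert _ (Set.finite_singleton _)))]
  rw [Set.ncard_insert_of_notMem (by simp [Zsqrtd.ext_iff])
    (Set.Finite.insert _ (Set.finite_singleton _))]
  rw [Set.ncard_insert_of_notMem (by simp [Zsqrtd.ext_iff]) (Set.finite_singleton _)]
  simp

lemma ncard_two_mul (m : ℕ) : (Gset (2 * m)).ncard = (Gset m).ncard := by
  have hbij : Set.BijOn (fun z : ℤ[i] => z * ⟨1,1⟩) (Gset m) (Gset (2*m)) := by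
    refine ⟨?_, ?_, ?_⟩
    · intro z hz
      simp only [Gset, Set.mem_setOf_eq] at hz ⊢
      rw [Zsqrtd.norm_mul, hz]
      simp [Zsqrtd.norm_def]; push_cast; ring
    · intro z _ w _ h
      have h2 : (⟨1,1⟩ : ℤ[i]) ≠ 0 := by simp [Zsqrtd.ext_iff]
      exact mul_right_cancel₀ h2 h
    · rintro ⟨x, y⟩ hw
      simp only [Gset, Set.mem_setOf_eq, Zsqrtd.norm_def] at hw
      have hw' : x * x + y * y = 2 * (m : ℤ) := by push_cast at hw; linarith
      have hpar : Even (x + y) := by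
        have h1 : Even (x * x + y * y) := ⟨(m:ℤ), by linarith⟩
        rw [Int.even_add, Int.even_mul, Int.even_mul] at h1
        rw [Int.even_add]; tauto
      obtain ⟨u, hu'⟩ := hpar
      have hu : x + y = 2 * u := by omega
      refine ⟨⟨u, u - x⟩, ?_, ?_⟩
      · simp only [Gset, Set.mem_setOf_eq, Zsqrtd.norm_def]
        push_cast
        have hy : y = 2 * u - x := by omega
        rw [hy] at hw'
        have h2 : (2:ℤ) * (u * u - -1 * (u - x) * (u - x)) = 2 * (m:ℤ) := by
          linear_combination hw'
        exact mul_left_cancel₀ two_ne_zero h2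
      · simp only [Zsqrtd.ext_iff, Zsqrtd.re_mul, Zsqrtd.im_mul]
        constructor <;> ring_nf <;> omega
  rw [← hbij.image_eq, Set.ncard_image_of_injOn hbij.injOn]

lemma q_dvd_of_dvd_sq_add_sq {q : ℕ} (hq : q.Prime) (hq3 : q % 4 = 3) {x y : ℤ}
    (h : (q : ℤ) ∣ x ^ 2 + y ^ 2) : (q : ℤ) ∣ x ∧ (q : ℤ) ∣ y := by
  haveI : Fact q.Prime := ⟨hq⟩
  have hcast : ((x : ZMod q)) ^ 2 + ((y : ZMod q)) ^ 2 = 0 := by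
    have := (ZMod.intCast_zmod_eq_zero_iff_dvd (x ^ 2 + y ^ 2) q).mpr h
    push_cast at this; exact this
  have hx0 : (x : ZMod q) = 0 := by
    by_contra hx
    have h2 : (x : ZMod q)^2 = -((y : ZMod q))^2 := by rw [eq_neg_iff_add_eq_zero]; exact hcast
    exact absurd (ZMod.mod_four_ne_three_of_sq_eq_neg_sq (p := q) hx h2) (by simp [hq3])
  have hy0 : (y : ZMod q) = 0 := by
    by_contra hy
    have h2 : (y : ZMod q)^2 = -((x : ZMod q))^2 := by
      rw [eq_neg_iff_add_eq_zero, add_comm]; exact hcast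
    exact absurd (ZMod.mod_four_ne_three_of_sq_eq_neg_sq (p := q) hy h2) (by simp [hq3])
  exact ⟨(ZMod.intCast_zmod_eq_zero_iff_dvd x q).mp hx0,
    (ZMod.intCast_zmod_eq_zero_iff_dvd y q).mp hy0⟩

lemma ncard_q_sq_mul {q : ℕ} (hq : q.Prime) (hq3 : q % 4 = 3) (m : ℕ) :
    (Gset (q ^ 2 * m)).ncard = (Gset m).ncard := by
  have hq0 : (q : ℤ) ≠ 0 := by exact_mod_cast hq.ne_zero
  have hbij : Set.BijOn (fun z : ℤ[i] => ((q : ℤ) : ℤ[i]) * z) (Gset m) (Gset (q^2*m)) := by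
    refine ⟨?_, ?_, ?_⟩
    · intro z hz
      simp only [Gset, Set.mem_setOf_eq] at hz ⊢
      rw [Zsqrtd.norm_mul, Zsqrtd.norm_intCast, hz]; push_cast; ring
    · intro z _ w _ h
      have : ((q:ℤ) : ℤ[i]) ≠ 0 := by
        simp only [ne_eq, Zsqrtd.ext_iff]
        simp [Zsqrtd.re_intCast, hq.ne_zero]
      exact mul_left_cancel₀ this h
    · rintro ⟨x, y⟩ hw
      simp only [Gset, Set.mem_setOf_eq, Zsqrtd.norm_def] at hw
      have hw' : x ^ 2 + y ^ 2 = (q:ℤ) ^ 2 * m := by push_cast at hw; ring_nf; ring_nf at hw; linarith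
      have hdvd : (q:ℤ) ∣ x ^ 2 + y ^ 2 := ⟨(q:ℤ) * m, by rw [hw']; ring⟩
      obtain ⟨hx, hy⟩ := q_dvd_of_dvd_sq_add_sq hq hq3 hdvd
      obtain ⟨x', rfl⟩ := hx
      obtain ⟨y', rfl⟩ := hy
      refine ⟨⟨x', y'⟩, ?_, ?_⟩
      · simp only [Gset, Set.mem_setOf_eq, Zsqrtd.norm_def]
        have : (q:ℤ)^2 * (x' * x' + y' * y') = (q:ℤ)^2 * m := by ring_nf; ring_nf at hw'; linarith
        have := mul_left_cancel₀ (pow_ne_zero 2 hq0) this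
        linarith
      · simp [Zsqrtd.ext_iff, Zsqrtd.re_mul, Zsqrtd.im_mul, Zsqrtd.re_intCast, Zsqrtd.im_intCast]
  rw [← hbij.image_eq, Set.ncard_image_of_injOn hbij.injOn]

lemma Gset_q_odd_empty {q : ℕ} (hq : q.Prime) (hq3 : q % 4 = 3) {b m : ℕ}
    (hb : Odd b) (hm : ¬ q ∣ m) : Gset (q ^ b * m) = ∅ := by
  ext z
  simp only [Gset, Set.mem_setOf_eq, Set.mem_empty_iff_false, iff_false]
  intro hz
  obtain ⟨x, y⟩ := z
  simp only [Zsqrtd.norm_def] at hz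
  have hz' : x ^ 2 + y ^ 2 = (q : ℤ) ^ b * m := by push_cast at hz ⊢; ring_nf; ring_nf at hz; linarith
  clear hz
  induction b using Nat.strong_induction_on generalizing x y with
  | _ b ih =>
    have hb1 : 1 ≤ b := hb.pos
    have hdvd : (q:ℤ) ∣ x ^ 2 + y ^ 2 := by
      rw [hz']; exact Dvd.dvd.mul_right (dvd_pow_self _ (by omega)) _
    obtain ⟨hx, hy⟩ := q_dvd_of_dvd_sq_add_sq hq hq3 hdvd
    obtain ⟨x', rfl⟩ := hx
    obtain ⟨y', rfl⟩ := hy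
    have hb2 : b ≠ 1 := by
      rintro rfl
      -- q^1 * m = q^2 (x'^2+y'^2)  => q ∣ m
      have : (q:ℤ) * ((q:ℤ) * (x'^2 + y'^2)) = (q:ℤ) * m := by ring_nf; ring_nf at hz'; linarith
      have h2 := mul_left_cancel₀ (by exact_mod_cast hq.ne_zero : (q:ℤ) ≠ 0) this
      have : (q:ℤ) ∣ (m:ℤ) := ⟨x'^2+y'^2, h2.symm⟩
      exact hm (by exact_mod_cast this)
    have hb3 : 2 ≤ b := by omega
    have hq0 : (q:ℤ) ≠ 0 := by exact_mod_cast hq.ne_zero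
    have hodd : Odd (b - 2) := Nat.Odd.sub_even hb3 hb (by norm_num)
    refine ih (b - 2) (by omega) hodd x' y' ?_
    have hpow : (q:ℤ)^b = (q:ℤ)^2 * (q:ℤ)^(b-2) := by rw [← pow_add]; congr 1; omega
    have h3 : (q:ℤ)^2 * (x'^2 + y'^2) = (q:ℤ)^2 * ((q:ℤ)^(b-2) * m) := by
      linear_combination hz' + (m:ℤ) * hpow
    exact mul_left_cancel₀ (pow_ne_zero 2 hq0) h3

lemma GNorm_pow (x : ℤ[i]) (k : ℕ) : (x ^ k).norm = x.norm ^ k :=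
  map_pow Zsqrtd.normMonoidHom x k

lemma prime_of_norm_prime {p : ℕ} (hp : p.Prime) {π : ℤ[i]} (hπ : π.norm = (p : ℤ)) :
    Prime π := by
  rw [← UniqueFactorizationMonoid.irreducible_iff_prime]
  constructor
  · rw [← Zsqrtd.norm_eq_one_iff, hπ]
    simpa using hp.ne_one
  · intro x y hxy
    have hn : (x.norm * y.norm) = (p : ℤ) := by rw [← Zsqrtd.norm_mul, ← hxy, hπ]
    have hnat : x.norm.natAbs * y.norm.natAbs = p := by
      rw [← Int.natAbs_mul, hn, Int.natAbs_natCast]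
    rcases (Nat.Prime.eq_one_or_self_of_dvd hp _ ⟨_, hnat.symm⟩) with h1 | h1
    · left; rw [← Zsqrtd.norm_eq_one_iff]; exact h1
    · right; rw [← Zsqrtd.norm_eq_one_iff]
      rw [h1] at hnat
      have : p * y.norm.natAbs = p * 1 := by rw [mul_one]; exact hnat
      exact Nat.eq_of_mul_eq_mul_left hp.pos this

lemma sq_ne_prime {p : ℕ} (hp : p.Prime) (A : ℤ) : A * A ≠ (p : ℤ) := by
  intro h
  have hnat : A.natAbs * A.natAbs = p := by rw [← Int.natAbs_mul, h, Int.natAbs_natCast]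
  rcases (Nat.Prime.eq_one_or_self_of_dvd hp _ ⟨_, hnat.symm⟩) with h1 | h1 <;>
    rw [h1] at hnat <;> nlinarith [hp.two_le]

lemma not_dvd_conj {p : ℕ} (hp : p.Prime) (hp1 : p % 4 = 1) {π : ℤ[i]}
    (hπ : π.norm = (p : ℤ)) : ¬ π ∣ star π := by
  rintro ⟨u, hu⟩
  have hp0 : (p : ℤ) ≠ 0 := by exact_mod_cast hp.ne_zero
  have h1 : (p : ℤ) * 1 = (p : ℤ) * u.norm := by
    rw [mul_one]
    calc (p:ℤ) = (star π).norm := by rw [Zsqrtd.norm_conj, hπ]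
    _ = π.norm * u.norm := by rw [hu, Zsqrtd.norm_mul]
    _ = (p:ℤ) * u.norm := by rw [hπ]
  have hnu : u.norm = 1 := (mul_left_cancel₀ hp0 h1).symm
  have hu4 := (mem_Gset_one u).mp (by simpa [Gset] using hnu)
  obtain ⟨A, B⟩ := π
  have hAB : A * A + B * B = (p : ℤ) := by
    simp only [Zsqrtd.norm_def] at hπ; linarith
  have hodd : ¬ (2 : ℤ) ∣ (p : ℤ) := by
    intro h2
    have : (2 : ℕ) ∣ p := by exact_mod_cast h2
    omega
  rcases hu4 with rfl | rfl | rfl | rfl <;>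
    simp only [Zsqrtd.star_mk, Zsqrtd.ext_iff, Zsqrtd.re_mul, Zsqrtd.im_mul] at hu
  · obtain ⟨h1', h2'⟩ := hu
    have hB : B = 0 := by linarith
    exact sq_ne_prime hp A (by rw [← hAB, hB]; ring)
  · obtain ⟨h1', h2'⟩ := hu
    have hA : A = 0 := by linarith
    exact sq_ne_prime hp B (by rw [← hAB, hA]; ring)
  · obtain ⟨h1', h2'⟩ := hu
    exact hodd ⟨B * B, by rw [← hAB]; linear_combination (A - B) * h1'⟩
  · obtain ⟨h1', h2'⟩ := hu
    exact hodd ⟨A * A, by rw [← hAB]; linear_combination (-(A+B)) * h1'⟩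

lemma exists_pi {p : ℕ} (hp : p.Prime) (hp1 : p % 4 = 1) :
    ∃ π : ℤ[i], π.norm = (p : ℤ) := by
  haveI : Fact p.Prime := ⟨hp⟩
  obtain ⟨A, B, hAB⟩ := Nat.Prime.sq_add_sq (p := p) (by omega)
  refine ⟨⟨(A : ℤ), (B : ℤ)⟩, ?_⟩
  simp only [Zsqrtd.norm_def]
  push_cast [← hAB]; ring

lemma ncard_rec {p m : ℕ} (hp : p.Prime) (hp1 : p % 4 = 1) (hpm : ¬ p ∣ m)
    {π : ℤ[i]} (hπ : π.norm = (p : ℤ)) (a : ℕ) :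
    (Gset (p ^ (a + 1) * m)).ncard = (Gset (p ^ a * m)).ncard + (Gset m).ncard := by
  have hπp : Prime π := prime_of_norm_prime hp hπ
  have hπc : Prime (star π) := prime_of_norm_prime hp (by rw [Zsqrtd.norm_conj]; exact hπ)
  have hnd : ¬ π ∣ star π := not_dvd_conj hp hp1 hπ
  have hπ0 : π ≠ 0 := hπp.ne_zero
  have hp0 : (p : ℤ) ≠ 0 := by exact_mod_cast hp.ne_zero
  have hps : ((p : ℕ) : ℤ[i]) = π * star π := by
    have := Zsqrtd.norm_eq_mul_conj π
    rw [hπ] at this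
    exact_mod_cast this
  have hpnw : ∀ w : ℤ[i], w.norm = (m : ℤ) → ¬ π ∣ w := by
    rintro w hw ⟨v, hv⟩
    apply hpm
    have h2 : (m : ℤ) = (p : ℤ) * v.norm := by rw [← hw, hv, Zsqrtd.norm_mul, hπ]
    have h3 : (p : ℤ) ∣ (m : ℤ) := Dvd.intro _ h2.symm
    exact_mod_cast h3
  set S := Gset (p ^ (a + 1) * m) with hS
  set A1 := {z ∈ S | π ∣ z} with hA1
  set B1 := {z ∈ S | ¬ π ∣ z} with hB1
  have hsplit : S = A1 ∪ B1 := by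
    ext z; by_cases h : π ∣ z <;> simp [hA1, hB1, h]
  have hdisj : Disjoint A1 B1 := by
    rw [Set.disjoint_iff]
    rintro z ⟨⟨_, h1⟩, ⟨_, h2⟩⟩
    exact absurd h1 h2
  have hfin : S.Finite := Gset_finite _
  have hbijA : Set.BijOn (fun w : ℤ[i] => π * w) (Gset (p ^ a * m)) A1 := by
    refine ⟨?_, fun z _ w _ h => mul_left_cancel₀ hπ0 h, ?_⟩
    · intro w hw
      simp only [Gset, Set.mem_setOf_eq] at hw
      refine ⟨?_, Dvd.intro _ rfl⟩
      simp only [hS, Gset, Set.mem_setOf_eq, Zsqrtd.norm_mul, hπ, hw]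
      push_cast; ring
    · rintro z ⟨hz, w, rfl⟩
      refine ⟨w, ?_, rfl⟩
      simp only [hS, Gset, Set.mem_setOf_eq, Zsqrtd.norm_mul, hπ] at hz
      simp only [Gset, Set.mem_setOf_eq]
      have h4 : (p : ℤ) * w.norm = (p:ℤ) * ((p:ℤ) ^ a * m) := by
        rw [hz]; push_cast; ring
      rw [mul_left_cancel₀ hp0 h4]; push_cast; ring
  have hbijB : Set.BijOn (fun w : ℤ[i] => (star π) ^ (a + 1) * w) (Gset m) B1 := by
    have hsp0 : (star π) ^ (a + 1) ≠ 0 := pow_ne_zero _ hπc.ne_zero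
    have hnsp : ((star π) ^ (a + 1)).norm = (p : ℤ) ^ (a + 1) := by
      rw [GNorm_pow, Zsqrtd.norm_conj, hπ]
    refine ⟨?_, fun z _ w _ h => mul_left_cancel₀ hsp0 h, ?_⟩
    · intro w hw
      simp only [Gset, Set.mem_setOf_eq] at hw
      constructor
      · simp only [hS, Gset, Set.mem_setOf_eq, Zsqrtd.norm_mul, hnsp, hw]
        push_cast; ring
      · intro hd
        rcases hπp.dvd_mul.mp hd with h | h
        · exact hnd (hπp.dvd_of_dvd_pow h)
        · exact hpnw w hw h
    · rintro z ⟨hz, hnpz⟩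
      simp only [hS, Gset, Set.mem_setOf_eq] at hz
      have key : ∀ k, k ≤ a + 1 → (star π) ^ k ∣ z := by
        intro k
        induction k with
        | zero => intro _; simp
        | succ k ih =>
          intro hk
          obtain ⟨w, hw⟩ := ih (by omega)
          have hz' : (p:ℤ) ^ k * w.norm = (p:ℤ) ^ (a+1) * m := by
            have h5 := hz
            rw [hw, Zsqrtd.norm_mul, GNorm_pow, Zsqrtd.norm_conj, hπ] at h5
            push_cast at h5; push_cast; linear_combination h5
          have hnw : w.norm = (p : ℤ) ^ (a + 1 - k) * m := by
            have hsp : (p:ℤ)^(a+1) = (p:ℤ)^k * (p:ℤ)^(a+1-k) := by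
              rw [← pow_add]; congr 1; omega
            refine mul_left_cancel₀ (pow_ne_zero k hp0) ?_
            rw [hz', hsp]; ring
          have hpdvd : (p : ℤ) ∣ w.norm := by
            rw [hnw]
            exact Dvd.dvd.mul_right (dvd_pow_self _ (by omega)) _
          obtain ⟨t, ht⟩ := hpdvd
          have hww : w * star w = π * star π * ((t : ℤ) : ℤ[i]) := by
            rw [← Zsqrtd.norm_eq_mul_conj, ht, ← hps]; push_cast; ring
          have hsd : star π ∣ w * star w := ⟨π * (t : ℤ[i]), by rw [hww]; ring⟩
          rcases hπc.dvd_mul.mp hsd with h | h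
          · obtain ⟨v, hv⟩ := h
            exact ⟨v, by rw [hw, hv]; ring⟩
          · exfalso
            apply hnpz
            obtain ⟨v, hv⟩ := h
            have h6 := congrArg star hv
            rw [star_star, star_mul, star_star] at h6
            have h7 : π ∣ w := ⟨star v, by rw [h6]; ring⟩
            exact h7.trans ⟨(star π) ^ k, by rw [hw]; ring⟩
      obtain ⟨w, hw⟩ := key (a + 1) le_rfl
      refine ⟨w, ?_, hw.symm⟩
      simp only [Gset, Set.mem_setOf_eq]
      have h8 := hz
      rw [hw, Zsqrtd.norm_mul, hnsp] at h8
      push_cast at h8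
      refine mul_left_cancel₀ (pow_ne_zero (a+1) hp0) ?_
      rw [h8]
  rw [hsplit, Set.ncard_union_eq hdisj (hfin.subset (by rw [hsplit]; exact Set.subset_union_left))
    (hfin.subset (by rw [hsplit]; exact Set.subset_union_right)),
    ← hbijA.image_eq, Set.ncard_image_of_injOn hbijA.injOn,
    ← hbijB.image_eq, Set.ncard_image_of_injOn hbijB.injOn]

lemma ncard_p_pow_mul {p m : ℕ} (hp : p.Prime) (hp1 : p % 4 = 1) (hpm : ¬ p ∣ m) (a : ℕ) :
    (Gset (p ^ a * m)).ncard = (a + 1) * (Gset m).ncard := by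
  obtain ⟨π, hπ⟩ := exists_pi hp hp1
  induction a with
  | zero => simp
  | succ a ih =>
    rw [ncard_rec hp hp1 hpm hπ a, ih]
    ring

lemma ncard_two_pow_mul (c m : ℕ) : (Gset (2 ^ c * m)).ncard = (Gset m).ncard := by
  induction c with
  | zero => rw [pow_zero, one_mul]
  | succ c ih =>
    have h : 2 ^ (c + 1) * m = 2 * (2 ^ c * m) := by ring
    rw [h, ncard_two_mul, ih]

lemma ncard_q_pow_even {q : ℕ} (hq : q.Prime) (hq3 : q % 4 = 3) (t m : ℕ) :
    (Gset (q ^ (2 * t) * m)).ncard = (Gset m).ncard := by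
  induction t with
  | zero => rw [mul_zero, pow_zero, one_mul]
  | succ t ih =>
    have h : q ^ (2 * (t + 1)) * m = q ^ 2 * (q ^ (2 * t) * m) := by ring
    rw [h, ncard_q_sq_mul hq hq3, ih]

lemma ncard_qprod {l : ℕ} (q b : Fin l → ℕ) (hq : ∀ j, (q j).Prime ∧ q j % 4 = 3)
    (hb : ∀ j, Even (b j)) (s : Finset (Fin l)) (m : ℕ) :
    (Gset ((∏ j ∈ s, q j ^ b j) * m)).ncard = (Gset m).ncard := by
  induction s using Finset.cons_induction with
  | empty => rw [Finset.prod_empty, one_mul]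
  | cons j s hj ih =>
    obtain ⟨t, ht⟩ := hb j
    have h : (∏ j' ∈ Finset.cons j s hj, q j' ^ b j') * m
        = q j ^ (2 * t) * ((∏ j' ∈ s, q j' ^ b j') * m) := by
      rw [Finset.prod_cons]
      have : b j = 2 * t := by omega
      rw [this]; ring
    rw [h, ncard_q_pow_even (hq j).1 (hq j).2, ih]

lemma ncard_pprod {n : ℕ} (p a : Fin n → ℕ) (hp : ∀ i, (p i).Prime ∧ p i % 4 = 1)
    (hpinj : Function.Injective p) (s : Finset (Fin n)) (m : ℕ)
    (hm : ∀ i ∈ s, ¬ p i ∣ m) :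
    (Gset ((∏ i ∈ s, p i ^ a i) * m)).ncard = (∏ i ∈ s, (1 + a i)) * (Gset m).ncard := by
  induction s using Finset.cons_induction with
  | empty => rw [Finset.prod_empty, one_mul, Finset.prod_empty, one_mul]
  | cons i s hi ih =>
    have hrest : ¬ p i ∣ (∏ i' ∈ s, p i' ^ a i') * m := by
      intro hd
      rcases ((hp i).1.prime.dvd_mul).mp hd with h | h
      · obtain ⟨i', hi', hdi⟩ := (Prime.dvd_finset_prod_iff (hp i).1.prime _).mp h
        have := (hp i).1.dvd_of_dvd_pow hdi
        have heq : p i = p i' := ((Nat.prime_dvd_prime_iff_eq (hp i).1 (hp i').1).mp this)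
        exact hi (hpinj heq ▸ hi')
      · exact hm i (Finset.mem_cons_self i s) h
    have h : (∏ i' ∈ Finset.cons i s hi, p i' ^ a i') * m
        = p i ^ a i * ((∏ i' ∈ s, p i' ^ a i') * m) := by
      rw [Finset.prod_cons]; ring
    rw [h, ncard_p_pow_mul (hp i).1 (hp i).2 hrest (a i),
      ih (fun i' hi' => hm i' (Finset.mem_cons_of_mem hi')), Finset.prod_cons]
    ring

theorem stmt_3 (n l c : ℕ) (p a : Fin n → ℕ) (q b : Fin l → ℕ)
    (hp : ∀ i, (p i).Prime ∧ p i % 4 = 1)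
    (hq : ∀ j, (q j).Prime ∧ q j % 4 = 3)
    (hpinj : Function.Injective p) (hqinj : Function.Injective q)
    (lam : ℕ) (hlam : 0 < lam)
    (hfact : lam = (∏ i, p i ^ a i) * (∏ j, q j ^ b j) * 2 ^ c) :
    {z : ℤ × ℤ | z.1 ^ 2 + z.2 ^ 2 = (lam : ℤ)}.ncard =
      if ∀ j, Even (b j) then 4 * ∏ i, (1 + a i) else 0 := by
  rw [transfer]
  split_ifs with heven
  · have h1 : lam = (∏ i, p i ^ a i) * ((∏ j, q j ^ b j) * (2 ^ c * 1)) := by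
      rw [hfact]; ring
    have hm : ∀ i ∈ Finset.univ, ¬ p i ∣ (∏ j, q j ^ b j) * (2 ^ c * 1) := by
      intro i _ hd
      rcases ((hp i).1.prime.dvd_mul).mp hd with h | h
      · obtain ⟨j, _, hdj⟩ := (Prime.dvd_finset_prod_iff (hp i).1.prime _).mp h
        have h2 := (hp i).1.dvd_of_dvd_pow hdj
        have heq : p i = q j := ((Nat.prime_dvd_prime_iff_eq (hp i).1 (hq j).1).mp h2)
        have := (hp i).2
        rw [heq] at this
        have h5 := (hq j).2
        omega
      · rw [mul_one] at h
        have h2 := (hp i).1.dvd_of_dvd_pow h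
        have heq : p i = 2 := (Nat.prime_dvd_prime_iff_eq (hp i).1 Nat.prime_two).mp h2
        have := (hp i).2
        omega
    rw [h1, ncard_pprod p a hp hpinj Finset.univ _ hm,
      ncard_qprod q b hq heven Finset.univ _, ncard_two_pow_mul, ncard_Gset_one]
    ring
  · push_neg at heven
    obtain ⟨j, hj⟩ := heven
    have hodd : Odd (b j) := Nat.odd_iff.mpr (by
      rcases Nat.even_or_odd (b j) with h | h
      · exact absurd h hj
      · exact Nat.odd_iff.mp h)
    set rest := (∏ i, p i ^ a i) * (∏ j' ∈ Finset.univ.erase j, q j' ^ b j') * 2 ^ c with hrest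
    have hlamr : lam = q j ^ b j * rest := by
      rw [hfact, hrest, ← Finset.mul_prod_erase _ _ (Finset.mem_univ j)]
      ring
    have hnd : ¬ q j ∣ rest := by
      intro hd
      rcases ((hq j).1.prime.dvd_mul).mp hd with h | h
      · rcases ((hq j).1.prime.dvd_mul).mp h with h2 | h2
        · obtain ⟨i, _, hdi⟩ := (Prime.dvd_finset_prod_iff (hq j).1.prime _).mp h2
          have h3 := (hq j).1.dvd_of_dvd_pow hdi
          have heq : q j = p i := ((Nat.prime_dvd_prime_iff_eq (hq j).1 (hp i).1).mp h3)
          have := (hq j).2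
          rw [heq] at this
          have h5 := (hp i).2
          omega
        · obtain ⟨j', hj', hdj⟩ := (Prime.dvd_finset_prod_iff (hq j).1.prime _).mp h2
          have h3 := (hq j).1.dvd_of_dvd_pow hdj
          have heq : q j = q j' := ((Nat.prime_dvd_prime_iff_eq (hq j).1 (hq j').1).mp h3)
          exact (Finset.mem_erase.mp hj').1 (hqinj heq.symm)
      · have h2 := (hq j).1.dvd_of_dvd_pow h
        have heq : q j = 2 := (Nat.prime_dvd_prime_iff_eq (hq j).1 Nat.prime_two).mp h2
        have := (hq j).2
        omega
    rw [hlamr, Gset_q_odd_empty (hq j).1 (hq j).2 hodd hnd, Set.ncard_empty]
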